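/- Lemma D.4 (Second moment of the masked microbatch average). Let N ≥ 1, let (Ω, 𝓕, μ) be a probability space, let M ≥ 1, σ ≥ 0, and let G ∈ ℝ^N. For m = 1, …, M let U_m, g_m : Ω → ℝ^N be measurable random vectors such that: every coordinate of U_m takes values in {0,1}; U_m and g_m are independent; E[g_m] = G; E[‖g_m − G‖²] ≤ σ²; and the pairs make the masked vectors Z_m := U_m ⊙ g_m mutually independent across m. Let Δ := (1/M) Σ_{m=1}^M Z_m. Then E[‖Δ‖²] ≤ (1 + 1/M) ‖G‖² + σ²/M. -/

import Mathlib

open MeasureTheory ProbabilityTheory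

/-- Coordinatewise (Hadamard) product on `ℝ^N`. -/
noncomputable def hadamard {N : ℕ} (u v : EuclideanSpace ℝ (Fin N)) :
    EuclideanSpace ℝ (Fin N) :=
  (EuclideanSpace.equiv (Fin N) ℝ).symm (fun j => u j * v j)

lemma norm_sq_eq_sum_sq {N : ℕ} (x : EuclideanSpace ℝ (Fin N)) :
    ‖x‖ ^ 2 = ∑ j, (x j) ^ 2 := by
  rw [EuclideanSpace.norm_eq, Real.sq_sqrt (by positivity)]
  simp [sq_abs]

lemma abs_coord_le_norm {N : ℕ} (x : EuclideanSpace ℝ (Fin N)) (j : Fin N) :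
    |x j| ≤ ‖x‖ := by
  have h : (x j) ^ 2 ≤ ‖x‖ ^ 2 := by
    rw [norm_sq_eq_sum_sq]
    exact Finset.single_le_sum (fun i _ => sq_nonneg (x i)) (Finset.mem_univ j)
  rw [← Real.sqrt_sq_eq_abs, ← Real.sqrt_sq (norm_nonneg x)]
  exact Real.sqrt_le_sqrt h

/-- **Lemma D.4 (Second moment of the masked microbatch average).** -/
theorem second_moment_masked_average
    {N : ℕ} (hN : 1 ≤ N)
    {Ω : Type*} [MeasurableSpace Ω] (μ : Measure Ω) [IsProbabilityMeasure μ]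
    (M : ℕ) (hM : 1 ≤ M) (σ : ℝ) (hσ : 0 ≤ σ)
    (G : EuclideanSpace ℝ (Fin N))
    (U g : Fin M → Ω → EuclideanSpace ℝ (Fin N))
    (hUmeas : ∀ m, Measurable (U m)) (hgmeas : ∀ m, Measurable (g m))
    (hU01 : ∀ m, ∀ ω, ∀ j : Fin N, U m ω j = 0 ∨ U m ω j = 1)
    (hindep : ∀ m, IndepFun (U m) (g m) μ)
    (hgint : ∀ m, Integrable (g m) μ)
    (hgmean : ∀ m, (∫ ω, g m ω ∂μ) = G)
    (hgvarint : ∀ m, Integrable (fun ω => ‖g m ω - G‖ ^ 2) μ)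
    (hgvar : ∀ m, (∫ ω, ‖g m ω - G‖ ^ 2 ∂μ) ≤ σ ^ 2)
    (Z : Fin M → Ω → EuclideanSpace ℝ (Fin N))
    (hZ : ∀ m, ∀ ω, Z m ω = hadamard (U m ω) (g m ω))
    (hZindep : iIndepFun Z μ)
    (Δ : Ω → EuclideanSpace ℝ (Fin N))
    (hΔ : ∀ ω, Δ ω = (M : ℝ)⁻¹ • ∑ m : Fin M, Z m ω) :
    (∫ ω, ‖Δ ω‖ ^ 2 ∂μ) ≤ (1 + 1 / (M : ℝ)) * ‖G‖ ^ 2 + σ ^ 2 / M := by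
  have hMpos : (0 : ℝ) < M := by exact_mod_cast hM
  -- coordinates of Z
  have hZ' : ∀ m ω (j : Fin N), Z m ω j = U m ω j * g m ω j := by
    intro m ω j; rw [hZ]; rfl
  -- measurability of coordinates
  have hUj : ∀ m (j : Fin N), Measurable (fun ω => U m ω j) :=
    fun m j => (measurable_pi_apply j).comp ((WithLp.measurable_ofLp 2 _).comp (hUmeas m))
  have hgj : ∀ m (j : Fin N), Measurable (fun ω => g m ω j) :=
    fun m j => (measurable_pi_apply j).comp ((WithLp.measurable_ofLp 2 _).comp (hgmeas m))
  have haj : ∀ m (j : Fin N), Measurable (fun ω => Z m ω j) := by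
    intro m j
    have : (fun ω => Z m ω j) = fun ω => U m ω j * g m ω j := funext fun ω => hZ' m ω j
    rw [this]; exact (hUj m j).mul (hgj m j)
  -- integrability of ‖g m‖^2
  have hg2int : ∀ m, Integrable (fun ω => ‖g m ω‖ ^ 2) μ := by
    intro m
    refine Integrable.mono' (((hgvarint m).const_mul 2).add (integrable_const (2 * ‖G‖ ^ 2)))
      (((hgmeas m).norm.pow_const 2).aestronglyMeasurable) ?_
    filter_upwards with ω
    simp only [Pi.add_apply]
    have h1 : ‖g m ω‖ ≤ ‖g m ω - G‖ + ‖G‖ := by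
      simpa using norm_add_le (g m ω - G) G
    have h2 : (0:ℝ) ≤ ‖g m ω‖ := norm_nonneg _
    rw [Real.norm_eq_abs, abs_of_nonneg (by positivity)]
    nlinarith [sq_nonneg (‖g m ω - G‖ - ‖G‖), mul_self_le_mul_self h2 h1,
      norm_nonneg (g m ω - G), norm_nonneg G]
  -- coordinatewise bound |Z_j| ≤ |g_j|
  have habsj : ∀ m ω (j : Fin N), |Z m ω j| ≤ |g m ω j| := by
    intro m ω j
    rw [hZ' m ω j, abs_mul]
    rcases hU01 m ω j with h | h <;> simp [h]
  have habs : ∀ m ω (j : Fin N), |Z m ω j| ≤ ‖g m ω‖ :=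
    fun m ω j => (habsj m ω j).trans (abs_coord_le_norm _ j)
  -- norm comparison ‖Z m ω‖ ≤ ‖g m ω‖
  have hZle : ∀ m ω, ‖Z m ω‖ ≤ ‖g m ω‖ := by
    intro m ω
    rw [← Real.sqrt_sq (norm_nonneg (Z m ω)), ← Real.sqrt_sq (norm_nonneg (g m ω))]
    apply Real.sqrt_le_sqrt
    rw [norm_sq_eq_sum_sq, norm_sq_eq_sum_sq]
    refine Finset.sum_le_sum fun j _ => ?_
    have h := habsj m ω j
    nlinarith [abs_nonneg (Z m ω j), mul_self_le_mul_self (abs_nonneg (Z m ω j)) h,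
      sq_abs (Z m ω j), sq_abs (g m ω j)]
  have haint : ∀ m (j : Fin N), Integrable (fun ω => Z m ω j) μ := by
    intro m j
    refine Integrable.mono' (hgint m).norm ((haj m j).aestronglyMeasurable) ?_
    filter_upwards with ω
    simpa [Real.norm_eq_abs] using habs m ω j
  have haaint : ∀ (m m' : Fin M) (j : Fin N),
      Integrable (fun ω => Z m ω j * Z m' ω j) μ := by
    intro m m' j
    refine Integrable.mono'
      (((hg2int m).add (hg2int m')).div_const 2)
      (((haj m j).mul (haj m' j)).aestronglyMeasurable) ?_
    filter_upwards with ω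
    simp only [Pi.add_apply]
    have h1 := habs m ω j
    have h2 := habs m' ω j
    have h3 : (0:ℝ) ≤ |Z m ω j| := abs_nonneg _
    have h4 : (0:ℝ) ≤ |Z m' ω j| := abs_nonneg _
    rw [Real.norm_eq_abs, abs_mul]
    nlinarith [sq_nonneg (‖g m ω‖ - ‖g m' ω‖),
      mul_le_mul h1 h2 h4 (norm_nonneg (g m ω))]
  -- mean of g coordinates
  have hgmeanj : ∀ m (j : Fin N), (∫ ω, g m ω j ∂μ) = G j := by
    intro m j
    have := (EuclideanSpace.proj j (𝕜 := ℝ)).integral_comp_comm (hgint m)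
    rw [hgmean m] at this
    exact this
  -- U coordinates: integrable, mean in [0,1]
  have hUint : ∀ m (j : Fin N), Integrable (fun ω => U m ω j) μ := by
    intro m j
    refine Integrable.mono' (integrable_const (1:ℝ)) ((hUj m j).aestronglyMeasurable) ?_
    filter_upwards with ω
    rcases hU01 m ω j with h | h <;> simp [h, Real.norm_eq_abs]
  have hp01 : ∀ m (j : Fin N),
      0 ≤ (∫ ω, U m ω j ∂μ) ∧ (∫ ω, U m ω j ∂μ) ≤ 1 := by
    intro m j
    constructor
    · refine integral_nonneg fun ω => ?_
      rcases hU01 m ω j with h | h <;> simp [h]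
    · calc (∫ ω, U m ω j ∂μ) ≤ ∫ _, (1:ℝ) ∂μ := by
            refine integral_mono (hUint m j) (integrable_const 1) fun ω => ?_
            rcases hU01 m ω j with h | h <;> simp [h]
      _ = 1 := by simp
  -- mean of Z coordinates
  have hZmean : ∀ m (j : Fin N),
      (∫ ω, Z m ω j ∂μ) = (∫ ω, U m ω j ∂μ) * G j := by
    intro m j
    have hind : IndepFun (fun ω => U m ω j) (fun ω => g m ω j) μ :=
      (hindep m).comp ((measurable_pi_apply j).comp (WithLp.measurable_ofLp 2 _))
        ((measurable_pi_apply j).comp (WithLp.measurable_ofLp 2 _))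
    have hmul := hind.integral_fun_mul_eq_mul_integral ((hUj m j).aestronglyMeasurable)
      ((hgj m j).aestronglyMeasurable)
    calc (∫ ω, Z m ω j ∂μ) = ∫ ω, U m ω j * g m ω j ∂μ := by
          congr 1; funext ω; exact hZ' m ω j
      _ = (∫ ω, U m ω j ∂μ) * (∫ ω, g m ω j ∂μ) := hmul
      _ = (∫ ω, U m ω j ∂μ) * G j := by rw [hgmeanj m j]
  -- S m m' : sum over coordinates of E[Z_m,j Z_m',j]
  set S : Fin M → Fin M → ℝ := fun m m' => ∑ j, ∫ ω, Z m ω j * Z m' ω j ∂μ with hS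
  -- diagonal bound
  have hdiag : ∀ m, S m m ≤ σ ^ 2 + ‖G‖ ^ 2 := by
    intro m
    have h1 : S m m = ∫ ω, ‖Z m ω‖ ^ 2 ∂μ := by
      simp only [hS]
      rw [← integral_finset_sum _ (fun j _ => haaint m m j)]
      congr 1; funext ω
      rw [norm_sq_eq_sum_sq]
      exact Finset.sum_congr rfl fun j _ => (pow_two (Z m ω j)).symm
    have hZmeas : Measurable (Z m) := (WithLp.measurable_toLp 2 _).comp (measurable_pi_lambda _ (fun j => haj m j))
    have hZ2int : Integrable (fun ω => ‖Z m ω‖ ^ 2) μ := by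
      refine Integrable.mono' (hg2int m)
        ((hZmeas.norm.pow_const 2).aestronglyMeasurable) ?_
      filter_upwards with ω
      rw [Real.norm_eq_abs, abs_of_nonneg (by positivity)]
      nlinarith [hZle m ω, norm_nonneg (Z m ω), norm_nonneg (g m ω),
        mul_self_le_mul_self (norm_nonneg (Z m ω)) (hZle m ω)]
    have h2 : (∫ ω, ‖Z m ω‖ ^ 2 ∂μ) ≤ ∫ ω, ‖g m ω‖ ^ 2 ∂μ := by
      refine integral_mono hZ2int (hg2int m) fun ω => ?_
      nlinarith [hZle m ω, norm_nonneg (Z m ω), norm_nonneg (g m ω),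
        mul_self_le_mul_self (norm_nonneg (Z m ω)) (hZle m ω)]
    have hinner_int : Integrable (fun ω => (inner ℝ G (g m ω - G) : ℝ)) μ :=
      (innerSL ℝ G).integrable_comp ((hgint m).sub (integrable_const G))
    have hinner_zero : (∫ ω, (inner ℝ G (g m ω - G) : ℝ) ∂μ) = 0 := by
      have hzero : (∫ ω, (g m ω - G) ∂μ) = 0 := by
        rw [integral_sub (hgint m) (integrable_const G), hgmean m]
        simp
      have hcomm := (innerSL ℝ G).integral_comp_comm ((hgint m).sub (integrable_const G))
      simp only [Pi.sub_apply, innerSL_apply_apply] at hcomm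
      rw [hcomm, hzero, inner_zero_right]
    have h3 : (∫ ω, ‖g m ω‖ ^ 2 ∂μ) = (∫ ω, ‖g m ω - G‖ ^ 2 ∂μ) + ‖G‖ ^ 2 := by
      have hdecomp : ∀ ω, ‖g m ω‖ ^ 2
          = ‖g m ω - G‖ ^ 2 + 2 * (inner ℝ G (g m ω - G) : ℝ) + ‖G‖ ^ 2 := by
        intro ω
        have h := norm_add_sq_real (g m ω - G) G
        rw [sub_add_cancel] at h
        rw [real_inner_comm] at h
        rw [h]
      have hint2 : Integrable (fun ω => 2 * (inner ℝ G (g m ω - G) : ℝ)) μ :=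
        hinner_int.const_mul 2
      have hint1 : Integrable
          (fun ω => ‖g m ω - G‖ ^ 2 + 2 * (inner ℝ G (g m ω - G) : ℝ)) μ :=
        (hgvarint m).add hint2
      calc (∫ ω, ‖g m ω‖ ^ 2 ∂μ)
          = ∫ ω, (‖g m ω - G‖ ^ 2 + 2 * (inner ℝ G (g m ω - G) : ℝ) + ‖G‖ ^ 2) ∂μ :=
            integral_congr_ae (Filter.Eventually.of_forall hdecomp)
        _ = (∫ ω, (‖g m ω - G‖ ^ 2 + 2 * (inner ℝ G (g m ω - G) : ℝ)) ∂μ)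
            + ∫ _, ‖G‖ ^ 2 ∂μ := integral_add hint1 (integrable_const _)
        _ = (∫ ω, ‖g m ω - G‖ ^ 2 ∂μ) + (∫ ω, 2 * (inner ℝ G (g m ω - G) : ℝ) ∂μ)
            + ‖G‖ ^ 2 := by rw [integral_add (hgvarint m) hint2]; simp
        _ = (∫ ω, ‖g m ω - G‖ ^ 2 ∂μ) + ‖G‖ ^ 2 := by
            rw [integral_const_mul, hinner_zero]; ring
    rw [h1]
    calc (∫ ω, ‖Z m ω‖ ^ 2 ∂μ) ≤ ∫ ω, ‖g m ω‖ ^ 2 ∂μ := h2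
      _ = (∫ ω, ‖g m ω - G‖ ^ 2 ∂μ) + ‖G‖ ^ 2 := h3
      _ ≤ σ ^ 2 + ‖G‖ ^ 2 := by linarith [hgvar m]
  -- off-diagonal bound
  have hoff : ∀ m m', m ≠ m' → S m m' ≤ ‖G‖ ^ 2 := by
    intro m m' hmm'
    have hind : IndepFun (Z m) (Z m') μ := hZindep.indepFun hmm'
    simp only [hS]
    rw [norm_sq_eq_sum_sq]
    refine Finset.sum_le_sum fun j _ => ?_
    have hindj : IndepFun (fun ω => Z m ω j) (fun ω => Z m' ω j) μ :=
      hind.comp ((measurable_pi_apply j).comp (WithLp.measurable_ofLp 2 _))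
        ((measurable_pi_apply j).comp (WithLp.measurable_ofLp 2 _))
    rw [hindj.integral_fun_mul_eq_mul_integral ((haj m j).aestronglyMeasurable) ((haj m' j).aestronglyMeasurable),
      hZmean m j, hZmean m' j]
    obtain ⟨hp1, hp2⟩ := hp01 m j
    obtain ⟨hq1, hq2⟩ := hp01 m' j
    have hpq : (∫ ω, U m ω j ∂μ) * (∫ ω, U m' ω j ∂μ) ≤ 1 := mul_le_one₀ hp2 hq1 hq2
    have hpq0 : 0 ≤ (∫ ω, U m ω j ∂μ) * (∫ ω, U m' ω j ∂μ) := mul_nonneg hp1 hq1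
    nlinarith [mul_nonneg (sub_nonneg.2 hpq) (sq_nonneg (G j))]
  -- main expansion
  have hmain : (∫ ω, ‖Δ ω‖ ^ 2 ∂μ)
      = (M : ℝ)⁻¹ ^ 2 * ∑ m : Fin M, ∑ m' : Fin M, S m m' := by
    have hpt : ∀ ω, ‖Δ ω‖ ^ 2
        = (M : ℝ)⁻¹ ^ 2 * ∑ m : Fin M, ∑ m' : Fin M, ∑ j, Z m ω j * Z m' ω j := by
      intro ω
      rw [hΔ ω, norm_sq_eq_sum_sq]
      have hcoord : ∀ j : Fin N,
          (((M : ℝ)⁻¹ • ∑ m : Fin M, Z m ω) j) = (M : ℝ)⁻¹ * ∑ m : Fin M, Z m ω j := by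
        intro j
        have hs : ((∑ m : Fin M, Z m ω) j) = ∑ m : Fin M, Z m ω j :=
          map_sum (EuclideanSpace.proj j (𝕜 := ℝ)) (fun m => Z m ω) Finset.univ
        rw [show (((M : ℝ)⁻¹ • ∑ m : Fin M, Z m ω) j)
            = (M : ℝ)⁻¹ * ((∑ m : Fin M, Z m ω) j) from rfl, hs]
      calc (∑ j, (((M : ℝ)⁻¹ • ∑ m : Fin M, Z m ω) j) ^ 2)
          = ∑ j, (M : ℝ)⁻¹ ^ 2 * ((∑ m : Fin M, Z m ω j) * (∑ m' : Fin M, Z m' ω j)) := by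
            refine Finset.sum_congr rfl fun j _ => ?_
            rw [hcoord j]; ring
        _ = (M : ℝ)⁻¹ ^ 2 * ∑ j, ∑ m : Fin M, ∑ m' : Fin M, Z m ω j * Z m' ω j := by
            rw [Finset.mul_sum]
            refine Finset.sum_congr rfl fun j _ => ?_
            rw [Finset.sum_mul_sum]
        _ = (M : ℝ)⁻¹ ^ 2 * ∑ m : Fin M, ∑ m' : Fin M, ∑ j, Z m ω j * Z m' ω j := by
            rw [Finset.sum_comm]
            congr 1
            refine Finset.sum_congr rfl fun m _ => ?_
            rw [Finset.sum_comm]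
    calc (∫ ω, ‖Δ ω‖ ^ 2 ∂μ)
        = ∫ ω, (M : ℝ)⁻¹ ^ 2 * ∑ m : Fin M, ∑ m' : Fin M, ∑ j, Z m ω j * Z m' ω j ∂μ :=
          integral_congr_ae (Filter.Eventually.of_forall hpt)
      _ = (M : ℝ)⁻¹ ^ 2 * ∫ ω, ∑ m : Fin M, ∑ m' : Fin M, ∑ j, Z m ω j * Z m' ω j ∂μ :=
          integral_const_mul _ _
      _ = (M : ℝ)⁻¹ ^ 2 * ∑ m : Fin M, ∑ m' : Fin M, S m m' := by
          rw [integral_finset_sum _ (fun m _ =>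
            integrable_finset_sum _ (fun m' _ => integrable_finset_sum _ (fun j _ => haaint m m' j)))]
          congr 1
          refine Finset.sum_congr rfl fun m _ => ?_
          rw [integral_finset_sum _ (fun m' _ => integrable_finset_sum _ (fun j _ => haaint m m' j))]
          refine Finset.sum_congr rfl fun m' _ => ?_
          simp only [hS]
          rw [integral_finset_sum _ (fun j _ => haaint m m' j)]
  -- combine
  have hsum : (∑ m : Fin M, ∑ m' : Fin M, S m m')
      ≤ (M : ℝ) * (σ ^ 2 + ‖G‖ ^ 2) + ((M : ℝ) * ((M : ℝ) - 1)) * ‖G‖ ^ 2 := by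
    have hrow : ∀ m : Fin M, (∑ m' : Fin M, S m m')
        ≤ (σ ^ 2 + ‖G‖ ^ 2) + ((M : ℝ) - 1) * ‖G‖ ^ 2 := by
      intro m
      rw [← Finset.add_sum_erase _ _ (Finset.mem_univ m)]
      have h1 : (∑ m' ∈ Finset.univ.erase m, S m m') ≤ ((M : ℝ) - 1) * ‖G‖ ^ 2 := by
        have hcard : ((Finset.univ.erase m).card : ℝ) = (M : ℝ) - 1 := by
          rw [Finset.card_erase_of_mem (Finset.mem_univ m)]
          simp [Nat.cast_sub hM]
        calc (∑ m' ∈ Finset.univ.erase m, S m m')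
            ≤ ∑ _m' ∈ Finset.univ.erase m, ‖G‖ ^ 2 := by
              refine Finset.sum_le_sum fun m' hm' => ?_
              exact hoff m m' (Ne.symm (Finset.ne_of_mem_erase hm'))
          _ = ((Finset.univ.erase m).card : ℝ) * ‖G‖ ^ 2 := by
              rw [Finset.sum_const, nsmul_eq_mul]
          _ = ((M : ℝ) - 1) * ‖G‖ ^ 2 := by rw [hcard]
      linarith [hdiag m]
    calc (∑ m : Fin M, ∑ m' : Fin M, S m m')
        ≤ ∑ _m : Fin M, ((σ ^ 2 + ‖G‖ ^ 2) + ((M : ℝ) - 1) * ‖G‖ ^ 2) :=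
          Finset.sum_le_sum fun m _ => hrow m
      _ = (M : ℝ) * ((σ ^ 2 + ‖G‖ ^ 2) + ((M : ℝ) - 1) * ‖G‖ ^ 2) := by
          rw [Finset.sum_const, nsmul_eq_mul]; simp
      _ = (M : ℝ) * (σ ^ 2 + ‖G‖ ^ 2) + ((M : ℝ) * ((M : ℝ) - 1)) * ‖G‖ ^ 2 := by ring
  rw [hmain]
  have hGnn : (0:ℝ) ≤ ‖G‖ ^ 2 := sq_nonneg _
  have hstep : (M : ℝ)⁻¹ ^ 2 * (∑ m : Fin M, ∑ m' : Fin M, S m m')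
      ≤ (M : ℝ)⁻¹ ^ 2 * ((M : ℝ) * (σ ^ 2 + ‖G‖ ^ 2) + ((M : ℝ) * ((M : ℝ) - 1)) * ‖G‖ ^ 2) :=
    mul_le_mul_of_nonneg_left hsum (by positivity)
  refine hstep.trans ?_
  rw [show ((M : ℝ)⁻¹ ^ 2 * ((M : ℝ) * (σ ^ 2 + ‖G‖ ^ 2) + ((M : ℝ) * ((M : ℝ) - 1)) * ‖G‖ ^ 2))
      = ‖G‖ ^ 2 + σ ^ 2 / M from by field_simp; ring]
  rw [div_eq_mul_inv, one_div]
  nlinarith [mul_nonneg (inv_nonneg.mpr hMpos.le) hGnn]
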